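/- arXiv:1611.01225 — 5 statements merged into one kernel-verified Lean document; each statement's English description precedes it below -/
import Mathlib

section
/- There is no consensus method φ on rooted phylogenetic trees that simultaneously satisfies unanimity, anonymity, neutrality, and extension stability, even when restricted to profiles of exactly two trees. -/
/-- A (candidate) rooted phylogenetic tree, encoded by its set of clusters. -/
abbrev PTree : Type := Finset (Finset ℕ)

/-- Two clusters are nested: disjoint or one contained in the other. -/
abbrev Nested (C D : Finset ℕ) : Prop := C ∩ D = ∅ ∨ C ⊆ D ∨ D ⊆ C

/-- `H` is a hierarchy on leaf set `X`: a rooted phylogenetic tree in `RP(X)`. -/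
structure IsHierarchy (X : Finset ℕ) (H : PTree) : Prop where
  subset_top : ∀ C ∈ H, C ⊆ X
  cluster_nonempty : ∀ C ∈ H, C.Nonempty
  top_mem : X ∈ H
  singleton_mem : ∀ x ∈ X, ({x} : Finset ℕ) ∈ H
  laminar : ∀ C ∈ H, ∀ D ∈ H, Nested C D

/-- Restriction `T|_Y` of a tree to a subset `Y` of the leaves. -/
def restrictT (H : PTree) (Y : Finset ℕ) : PTree :=
  (H.image (fun C => C ∩ Y)).filter (fun C => C.Nonempty)

/-- A consensus method: for every leaf set and profile, an output tree. -/
abbrev ConsensusMethod : Type := Finset ℕ → List PTree → PTree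

/-- Relabel the leaves of a tree by `f`. -/
def relabelT (f : ℕ → ℕ) (H : PTree) : PTree := H.image (fun C => C.image f)

/-- A consensus method sends profiles of trees on `X` to a tree on `X`. -/
def ProducesHierarchy (φ : ConsensusMethod) : Prop :=
  ∀ (X : Finset ℕ) (P : List PTree), P ≠ [] → (∀ T ∈ P, IsHierarchy X T) →
    IsHierarchy X (φ X P)

/-- Unanimity: a constant profile yields that tree. -/
def Unanimity (φ : ConsensusMethod) : Prop :=
  ∀ (X : Finset ℕ) (T : PTree) (k : ℕ), k ≠ 0 → IsHierarchy X T →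
    φ X (List.replicate k T) = T

/-- Anonymity: invariance under reordering the profile. -/
def Anonymity (φ : ConsensusMethod) : Prop :=
  ∀ (X : Finset ℕ) (P P' : List PTree), (∀ T ∈ P, IsHierarchy X T) →
    P.Perm P' → φ X P = φ X P'

/-- Neutrality: equivariance under relabelling the leaves by a bijection. -/
def Neutrality (φ : ConsensusMethod) : Prop :=
  ∀ (X : Finset ℕ) (P : List PTree) (e : ℕ ≃ ℕ), (∀ T ∈ P, IsHierarchy X T) →
    φ (X.image e) (P.map (relabelT e)) = relabelT e (φ X P)

/-- Extension stability: `φ(P|_Y) ⪯ φ(P)|_Y` (every cluster of the consensus of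
the restricted profile is a cluster of the restriction of the consensus). -/
def ExtensionStable (φ : ConsensusMethod) : Prop :=
  ∀ (X : Finset ℕ) (P : List PTree) (Y : Finset ℕ), (∀ T ∈ P, IsHierarchy X T) →
    Y ⊆ X → Y.Nonempty →
    φ Y (P.map (fun T => restrictT T Y)) ⊆ restrictT (φ X P) Y

/-- Extension stability restricted to profiles of exactly two trees. -/
def ExtensionStableOnPairs (φ : ConsensusMethod) : Prop :=
  ∀ (X : Finset ℕ) (T1 T2 : PTree) (Y : Finset ℕ),
    IsHierarchy X T1 → IsHierarchy X T2 → Y ⊆ X → Y.Nonempty →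
    φ Y [restrictT T1 Y, restrictT T2 Y] ⊆ restrictT (φ X [T1, T2]) Y

-- Auxiliary definitions for the proof
def Xb : Finset ℕ := {1,2,3,4,5}
def Ta : PTree := {{1},{2},{3},{4},{5},{4,5},{3,4,5},{2,3,4,5},{1,2,3,4,5}}
def Tb : PTree := {{1},{2},{3},{4},{5},{2,5},{1,2,5},{1,2,4,5},{1,2,3,4,5}}
def Ya : Finset ℕ := {1,2,3,5}
def Yb : Finset ℕ := {1,2,4,5}
def Yc : Finset ℕ := {1,3,4,5}
def Yd : Finset ℕ := {2,3,4,5}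
def eb : ℕ ≃ ℕ := Equiv.swap 3 4
def ec : ℕ ≃ ℕ := (Equiv.swap 1 3).trans (Equiv.swap 2 4)
def ed : ℕ ≃ ℕ := (Equiv.swap 3 2).trans ((Equiv.swap 1 3).trans (Equiv.swap 1 4))

lemma mem_restrictT {H : PTree} {Y A : Finset ℕ} :
    A ∈ restrictT H Y ↔ (∃ C ∈ H, C ∩ Y = A) ∧ A.Nonempty := by
  simp [restrictT]

/-- **No-go theorem**: no consensus method satisfies unanimity, anonymity,
neutrality and extension stability, even just on profiles of two trees. -/
theorem no_regular_extension_stable_consensus :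
    ¬ ∃ φ : ConsensusMethod, ProducesHierarchy φ ∧ Unanimity φ ∧ Anonymity φ ∧
      Neutrality φ ∧ ExtensionStableOnPairs φ := by
  rintro ⟨φ, hProd, hUna, hAno, hNeu, hExt⟩
  have hTa : IsHierarchy Xb Ta := ⟨by decide, by decide, by decide, by decide, by decide⟩
  have hTb : IsHierarchy Xb Tb := ⟨by decide, by decide, by decide, by decide, by decide⟩
  -- the big consensus tree H
  have hH : IsHierarchy Xb (φ Xb [Ta, Tb]) := by
    refine hProd Xb [Ta, Tb] (by simp) ?_
    intro T hT
    simp only [List.mem_cons, List.mem_singleton, List.not_mem_nil, or_false] at hT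
    rcases hT with h | h <;> subst h <;> assumption
  -- hierarchy facts for restricted trees
  have hSa : IsHierarchy Ya (restrictT Ta Ya) := ⟨by decide, by decide, by decide, by decide, by decide⟩
  have hSb : IsHierarchy Ya (restrictT Tb Ya) := ⟨by decide, by decide, by decide, by decide, by decide⟩
  have hlistYa : ∀ T ∈ [restrictT Ta Ya, restrictT Tb Ya], IsHierarchy Ya T := by
    intro T hT
    simp only [List.mem_cons, List.mem_singleton, List.not_mem_nil, or_false] at hT
    rcases hT with h | h <;> subst h <;> assumption
  -- extension at Ya
  have hsub1 : φ Ya [restrictT Ta Ya, restrictT Tb Ya] ⊆ restrictT (φ Xb [Ta, Tb]) Ya :=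
    hExt Xb Ta Tb Ya hTa hTb (by decide) (by decide)
  -- unanimity at {1,2,5}
  have hR : IsHierarchy ({1,2,5} : Finset ℕ) (restrictT (restrictT Ta Ya) {1,2,5}) :=
    ⟨by decide, by decide, by decide, by decide, by decide⟩
  have huni : φ {1,2,5} (List.replicate 2 (restrictT (restrictT Ta Ya) {1,2,5})) =
      restrictT (restrictT Ta Ya) {1,2,5} := hUna _ _ 2 (by decide) hR
  have hsub2 : φ ({1,2,5} : Finset ℕ)
      [restrictT (restrictT Ta Ya) {1,2,5}, restrictT (restrictT Tb Ya) {1,2,5}] ⊆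
      restrictT (φ Ya [restrictT Ta Ya, restrictT Tb Ya]) {1,2,5} :=
    hExt Ya (restrictT Ta Ya) (restrictT Tb Ya) {1,2,5} hSa hSb (by decide) (by decide)
  rw [show restrictT (restrictT Tb Ya) ({1,2,5} : Finset ℕ) =
      restrictT (restrictT Ta Ya) {1,2,5} from by decide] at hsub2
  rw [show [restrictT (restrictT Ta Ya) ({1,2,5} : Finset ℕ),
      restrictT (restrictT Ta Ya) ({1,2,5} : Finset ℕ)] =
      List.replicate 2 (restrictT (restrictT Ta Ya) ({1,2,5} : Finset ℕ)) from rfl,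
    huni] at hsub2
  -- extract u
  have h25 : ({2,5} : Finset ℕ) ∈ restrictT (φ Ya [restrictT Ta Ya, restrictT Tb Ya]) {1,2,5} :=
    hsub2 (by decide)
  obtain ⟨⟨u, huv1, huEq⟩, -⟩ := mem_restrictT.mp h25
  -- u ∈ restrict H Ya, giving C
  obtain ⟨⟨C, hCH, hCeq⟩, -⟩ := mem_restrictT.mp (hsub1 huv1)
  have huY1 : u ⊆ Ya := hCeq ▸ Finset.inter_subset_right
  have h2u : (2:ℕ) ∈ u := by
    have : (2:ℕ) ∈ u ∩ {1,2,5} := by rw [huEq]; decide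
    exact (Finset.mem_inter.mp this).1
  have h5u : (5:ℕ) ∈ u := by
    have : (5:ℕ) ∈ u ∩ {1,2,5} := by rw [huEq]; decide
    exact (Finset.mem_inter.mp this).1
  have h1u : (1:ℕ) ∉ u := by
    intro h
    have : (1:ℕ) ∈ u ∩ {1,2,5} := Finset.mem_inter.mpr ⟨h, by decide⟩
    rw [huEq] at this; exact absurd this (by decide)
  -- neutrality transports
  have hne2 := hNeu Ya [restrictT Ta Ya, restrictT Tb Ya] eb hlistYa
  simp only [List.map_cons, List.map_nil] at hne2
  rw [show Finset.image (⇑eb) Ya = Yb from by decide,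
      show relabelT (⇑eb) (restrictT Ta Ya) = restrictT Ta Yb from by decide,
      show relabelT (⇑eb) (restrictT Tb Ya) = restrictT Tb Yb from by decide] at hne2
  have hext2 := hExt Xb Ta Tb Yb hTa hTb (by decide) (by decide)
  rw [hne2] at hext2
  have hne3 := hNeu Ya [restrictT Ta Ya, restrictT Tb Ya] ec hlistYa
  simp only [List.map_cons, List.map_nil] at hne3
  rw [show Finset.image (⇑ec) Ya = Yc from by decide,
      show relabelT (⇑ec) (restrictT Ta Ya) = restrictT Tb Yc from by decide,
      show relabelT (⇑ec) (restrictT Tb Ya) = restrictT Ta Yc from by decide] at hne3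
  have hano3 : φ Yc [restrictT Tb Yc, restrictT Ta Yc] = φ Yc [restrictT Ta Yc, restrictT Tb Yc] := by
    refine hAno Yc _ _ ?_ (List.Perm.swap _ _ _)
    intro T hT
    simp only [List.mem_cons, List.mem_singleton, List.not_mem_nil, or_false] at hT
    rcases hT with h | h <;> subst h
    · exact ⟨by decide, by decide, by decide, by decide, by decide⟩
    · exact ⟨by decide, by decide, by decide, by decide, by decide⟩
  rw [hano3] at hne3
  have hext3 := hExt Xb Ta Tb Yc hTa hTb (by decide) (by decide)
  rw [hne3] at hext3
  have hne4 := hNeu Ya [restrictT Ta Ya, restrictT Tb Ya] ed hlistYa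
  simp only [List.map_cons, List.map_nil] at hne4
  rw [show Finset.image (⇑ed) Ya = Yd from by decide,
      show relabelT (⇑ed) (restrictT Ta Ya) = restrictT Tb Yd from by decide,
      show relabelT (⇑ed) (restrictT Tb Ya) = restrictT Ta Yd from by decide] at hne4
  have hano4 : φ Yd [restrictT Tb Yd, restrictT Ta Yd] = φ Yd [restrictT Ta Yd, restrictT Tb Yd] := by
    refine hAno Yd _ _ ?_ (List.Perm.swap _ _ _)
    intro T hT
    simp only [List.mem_cons, List.mem_singleton, List.not_mem_nil, or_false] at hT
    rcases hT with h | h <;> subst h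
    · exact ⟨by decide, by decide, by decide, by decide, by decide⟩
    · exact ⟨by decide, by decide, by decide, by decide, by decide⟩
  rw [hano4] at hne4
  have hext4 := hExt Xb Ta Tb Yd hTa hTb (by decide) (by decide)
  rw [hne4] at hext4
  -- case split on 3 ∈ u
  by_cases h3 : (3:ℕ) ∈ u
  · -- use C (from Ya) and E (from Yc)
    have hiE : Finset.image (⇑ec) u ∈ relabelT (⇑ec) (φ Ya [restrictT Ta Ya, restrictT Tb Ya]) :=
      Finset.mem_image_of_mem _ huv1
    obtain ⟨⟨E, hEH, hEeq⟩, -⟩ := mem_restrictT.mp (hext3 hiE)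
    have h5C : (5:ℕ) ∈ C := by
      have : (5:ℕ) ∈ C ∩ Ya := by rw [hCeq]; exact h5u
      exact (Finset.mem_inter.mp this).1
    have h3C : (3:ℕ) ∈ C := by
      have : (3:ℕ) ∈ C ∩ Ya := by rw [hCeq]; exact h3
      exact (Finset.mem_inter.mp this).1
    have h1C : (1:ℕ) ∉ C := by
      intro h
      have : (1:ℕ) ∈ C ∩ Ya := Finset.mem_inter.mpr ⟨h, by decide⟩
      rw [hCeq] at this; exact h1u this
    have h5E : (5:ℕ) ∈ E := by
      have : (5:ℕ) ∈ E ∩ Yc := by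
        rw [hEeq]; exact Finset.mem_image.mpr ⟨5, h5u, by decide⟩
      exact (Finset.mem_inter.mp this).1
    have h1E : (1:ℕ) ∈ E := by
      have : (1:ℕ) ∈ E ∩ Yc := by
        rw [hEeq]; exact Finset.mem_image.mpr ⟨3, h3, by decide⟩
      exact (Finset.mem_inter.mp this).1
    have h3E : (3:ℕ) ∉ E := by
      intro h
      have : (3:ℕ) ∈ E ∩ Yc := Finset.mem_inter.mpr ⟨h, by decide⟩
      rw [hEeq] at this
      obtain ⟨x, hxu, hxe⟩ := Finset.mem_image.mp this
      have hx : x ∈ Ya := huY1 hxu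
      fin_cases hx
      · exact h1u hxu
      · exact absurd hxe (by decide)
      · exact absurd hxe (by decide)
      · exact absurd hxe (by decide)
    rcases hH.laminar C hCH E hEH with hemp | hsub | hsub
    · have : (5:ℕ) ∈ C ∩ E := Finset.mem_inter.mpr ⟨h5C, h5E⟩
      rw [hemp] at this; exact absurd this (by decide)
    · exact h3E (hsub h3C)
    · exact h1C (hsub h1E)
  · -- use D (from Yb) and F (from Yd)
    have hiD : Finset.image (⇑eb) u ∈ relabelT (⇑eb) (φ Ya [restrictT Ta Ya, restrictT Tb Ya]) :=
      Finset.mem_image_of_mem _ huv1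
    obtain ⟨⟨D, hDH, hDeq⟩, -⟩ := mem_restrictT.mp (hext2 hiD)
    have hiF : Finset.image (⇑ed) u ∈ relabelT (⇑ed) (φ Ya [restrictT Ta Ya, restrictT Tb Ya]) :=
      Finset.mem_image_of_mem _ huv1
    obtain ⟨⟨F, hFH, hFeq⟩, -⟩ := mem_restrictT.mp (hext4 hiF)
    have h5D : (5:ℕ) ∈ D := by
      have : (5:ℕ) ∈ D ∩ Yb := by
        rw [hDeq]; exact Finset.mem_image.mpr ⟨5, h5u, by decide⟩
      exact (Finset.mem_inter.mp this).1
    have h2D : (2:ℕ) ∈ D := by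
      have : (2:ℕ) ∈ D ∩ Yb := by
        rw [hDeq]; exact Finset.mem_image.mpr ⟨2, h2u, by decide⟩
      exact (Finset.mem_inter.mp this).1
    have h4D : (4:ℕ) ∉ D := by
      intro h
      have : (4:ℕ) ∈ D ∩ Yb := Finset.mem_inter.mpr ⟨h, by decide⟩
      rw [hDeq] at this
      obtain ⟨x, hxu, hxe⟩ := Finset.mem_image.mp this
      have hx : x ∈ Ya := huY1 hxu
      fin_cases hx
      · exact absurd hxe (by decide)
      · exact absurd hxe (by decide)
      · exact h3 hxu
      · exact absurd hxe (by decide)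
    have h5F : (5:ℕ) ∈ F := by
      have : (5:ℕ) ∈ F ∩ Yd := by
        rw [hFeq]; exact Finset.mem_image.mpr ⟨5, h5u, by decide⟩
      exact (Finset.mem_inter.mp this).1
    have h4F : (4:ℕ) ∈ F := by
      have : (4:ℕ) ∈ F ∩ Yd := by
        rw [hFeq]; exact Finset.mem_image.mpr ⟨2, h2u, by decide⟩
      exact (Finset.mem_inter.mp this).1
    have h2F : (2:ℕ) ∉ F := by
      intro h
      have : (2:ℕ) ∈ F ∩ Yd := Finset.mem_inter.mpr ⟨h, by decide⟩
      rw [hFeq] at this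
      obtain ⟨x, hxu, hxe⟩ := Finset.mem_image.mp this
      have hx : x ∈ Ya := huY1 hxu
      fin_cases hx
      · exact absurd hxe (by decide)
      · exact absurd hxe (by decide)
      · exact h3 hxu
      · exact absurd hxe (by decide)
    rcases hH.laminar D hDH F hFH with hemp | hsub | hsub
    · have : (5:ℕ) ∈ D ∩ F := Finset.mem_inter.mpr ⟨h5D, h5F⟩
      rw [hemp] at this; exact absurd this (by decide)
    · exact h2F (hsub h2D)
    · exact h4D (hsub h4F)
end

section
/- Let φ be a consensus method on rooted phylogenetic trees satisfying unanimity, anonymity, neutrality, and extension stability. Let P be the profile of the two trees on leaf set {a,b,c,d} given by the hierarchies T1 with nontrivial clusters {a,b} and {a,b,c} (i.e. ((ab)c)d) and T2 with nontrivial clusters {b,c} and {a,b,c} (i.e. ((bc)a)d). Then {a,b,c} is a cluster of φ(P). -/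
section AuxForClusterAbc

set_option maxHeartbeats 1600000

/-- The 3-leaf tree `((pq)r)` is a hierarchy on `{p,q,r}`. -/
private lemma hier3 (p q r : ℕ) (hpq : p ≠ q) (hpr : p ≠ r) (hqr : q ≠ r) :
    IsHierarchy {p, q, r} ({{p}, {q}, {r}, {p, q}, {p, q, r}} : PTree) := by
  constructor
  · intro C hC
    simp only [Finset.mem_insert, Finset.mem_singleton] at hC
    rcases hC with h|h|h|h|h <;> subst h <;>
      · intro x hx; simp only [Finset.mem_insert, Finset.mem_singleton] at hx ⊢; tauto
  · intro C hC
    simp only [Finset.mem_insert, Finset.mem_singleton] at hC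
    rcases hC with h|h|h|h|h <;> subst h <;> simp
  · simp
  · intro x hx
    simp only [Finset.mem_insert, Finset.mem_singleton] at hx ⊢
    rcases hx with h|h|h <;> subst h <;> tauto
  · intro C hC D hD
    simp only [Finset.mem_insert, Finset.mem_singleton] at hC hD
    rcases hC with h|h|h|h|h <;> subst h <;> rcases hD with h|h|h|h|h <;> subst h <;>
      simp only [Nested, Finset.subset_iff, Finset.eq_empty_iff_forall_notMem,
        Finset.mem_inter, Finset.mem_insert, Finset.mem_singleton, not_and, not_or] <;>
      first
        | (left; intro x; omega)
        | (right; left; intro x; omega)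
        | (right; right; intro x; omega)

/-- The 4-leaf caterpillar `(((pq)r)s)` is a hierarchy on `{p,q,r,s}`. -/
private lemma hier4a (p q r s : ℕ) (hpq : p ≠ q) (hpr : p ≠ r) (hps : p ≠ s)
    (hqr : q ≠ r) (hqs : q ≠ s) (hrs : r ≠ s) :
    IsHierarchy {p, q, r, s}
      ({{p}, {q}, {r}, {s}, {p, q}, {p, q, r}, {p, q, r, s}} : PTree) := by
  constructor
  · intro C hC
    simp only [Finset.mem_insert, Finset.mem_singleton] at hC
    rcases hC with h|h|h|h|h|h|h <;> subst h <;>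
      · intro x hx; simp only [Finset.mem_insert, Finset.mem_singleton] at hx ⊢; tauto
  · intro C hC
    simp only [Finset.mem_insert, Finset.mem_singleton] at hC
    rcases hC with h|h|h|h|h|h|h <;> subst h <;> simp
  · simp
  · intro x hx
    simp only [Finset.mem_insert, Finset.mem_singleton] at hx ⊢
    rcases hx with h|h|h|h <;> subst h <;> tauto
  · intro C hC D hD
    simp only [Finset.mem_insert, Finset.mem_singleton] at hC hD
    rcases hC with h|h|h|h|h|h|h <;> subst h <;> rcases hD with h|h|h|h|h|h|h <;> subst h <;>
      simp only [Nested, Finset.subset_iff, Finset.eq_empty_iff_forall_notMem,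
        Finset.mem_inter, Finset.mem_insert, Finset.mem_singleton, not_and, not_or] <;>
      first
        | (left; intro x; omega)
        | (right; left; intro x; omega)
        | (right; right; intro x; omega)

/-- The 4-leaf caterpillar `(((qr)p)s)` is a hierarchy on `{p,q,r,s}`. -/
private lemma hier4b (p q r s : ℕ) (hpq : p ≠ q) (hpr : p ≠ r) (hps : p ≠ s)
    (hqr : q ≠ r) (hqs : q ≠ s) (hrs : r ≠ s) :
    IsHierarchy {p, q, r, s}
      ({{p}, {q}, {r}, {s}, {q, r}, {p, q, r}, {p, q, r, s}} : PTree) := by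
  constructor
  · intro C hC
    simp only [Finset.mem_insert, Finset.mem_singleton] at hC
    rcases hC with h|h|h|h|h|h|h <;> subst h <;>
      · intro x hx; simp only [Finset.mem_insert, Finset.mem_singleton] at hx ⊢; tauto
  · intro C hC
    simp only [Finset.mem_insert, Finset.mem_singleton] at hC
    rcases hC with h|h|h|h|h|h|h <;> subst h <;> simp
  · simp
  · intro x hx
    simp only [Finset.mem_insert, Finset.mem_singleton] at hx ⊢
    rcases hx with h|h|h|h <;> subst h <;> tauto
  · intro C hC D hD
    simp only [Finset.mem_insert, Finset.mem_singleton] at hC hD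
    rcases hC with h|h|h|h|h|h|h <;> subst h <;> rcases hD with h|h|h|h|h|h|h <;> subst h <;>
      simp only [Nested, Finset.subset_iff, Finset.eq_empty_iff_forall_notMem,
        Finset.mem_inter, Finset.mem_insert, Finset.mem_singleton, not_and, not_or] <;>
      first
        | (left; intro x; omega)
        | (right; left; intro x; omega)
        | (right; right; intro x; omega)

/-- Restriction of `(((pq)r)s)` to `{p,r,s}` is `((pr)s)`. -/
private lemma restr_a_prs (p q r s : ℕ) (hpq : p ≠ q) (hpr : p ≠ r) (hps : p ≠ s)
    (hqr : q ≠ r) (hqs : q ≠ s) (hrs : r ≠ s) :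
    restrictT ({{p}, {q}, {r}, {s}, {p, q}, {p, q, r}, {p, q, r, s}} : PTree) {p, r, s}
      = ({{p}, {r}, {s}, {p, r}, {p, r, s}} : PTree) := by
  have i1 : ({p} : Finset ℕ) ∩ {p,r,s} = {p} := by ext x; simp; try omega
  have i2 : ({q} : Finset ℕ) ∩ {p,r,s} = ∅ := by ext x; simp; try omega
  have i3 : ({r} : Finset ℕ) ∩ {p,r,s} = {r} := by ext x; simp; try omega
  have i4 : ({s} : Finset ℕ) ∩ {p,r,s} = {s} := by ext x; simp; try omega
  have i5 : ({p,q} : Finset ℕ) ∩ {p,r,s} = {p} := by ext x; simp; try omega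
  have i6 : ({p,q,r} : Finset ℕ) ∩ {p,r,s} = {p,r} := by ext x; simp; try omega
  have i7 : ({p,q,r,s} : Finset ℕ) ∩ {p,r,s} = {p,r,s} := by ext x; simp; try omega
  ext C
  simp only [restrictT, Finset.mem_filter, Finset.mem_image, Finset.mem_insert,
    Finset.mem_singleton]
  constructor
  · rintro ⟨⟨B, hB, rfl⟩, hne⟩
    rcases hB with h|h|h|h|h|h|h <;> subst h <;>
      simp only [i1,i2,i3,i4,i5,i6,i7] at hne ⊢ <;> tauto
  · rintro (h|h|h|h|h) <;> subst h <;> refine ⟨⟨?_, ?_, ?_⟩, by simp⟩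
    exacts [{p}, by tauto, i1, {r}, by tauto, i3, {s}, by tauto, i4,
      {p,q,r}, by tauto, i6, {p,q,r,s}, by tauto, i7]

/-- Restriction of `(((pq)r)s)` to `{q,r,s}` is `((qr)s)`. -/
private lemma restr_a_qrs (p q r s : ℕ) (hpq : p ≠ q) (hpr : p ≠ r) (hps : p ≠ s)
    (hqr : q ≠ r) (hqs : q ≠ s) (hrs : r ≠ s) :
    restrictT ({{p}, {q}, {r}, {s}, {p, q}, {p, q, r}, {p, q, r, s}} : PTree) {q, r, s}
      = ({{q}, {r}, {s}, {q, r}, {q, r, s}} : PTree) := by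
  have i1 : ({p} : Finset ℕ) ∩ {q,r,s} = ∅ := by ext x; simp; try omega
  have i2 : ({q} : Finset ℕ) ∩ {q,r,s} = {q} := by ext x; simp; try omega
  have i3 : ({r} : Finset ℕ) ∩ {q,r,s} = {r} := by ext x; simp; try omega
  have i4 : ({s} : Finset ℕ) ∩ {q,r,s} = {s} := by ext x; simp; try omega
  have i5 : ({p,q} : Finset ℕ) ∩ {q,r,s} = {q} := by ext x; simp; try omega
  have i6 : ({p,q,r} : Finset ℕ) ∩ {q,r,s} = {q,r} := by ext x; simp; try omega
  have i7 : ({p,q,r,s} : Finset ℕ) ∩ {q,r,s} = {q,r,s} := by ext x; simp; try omega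
  ext C
  simp only [restrictT, Finset.mem_filter, Finset.mem_image, Finset.mem_insert,
    Finset.mem_singleton]
  constructor
  · rintro ⟨⟨B, hB, rfl⟩, hne⟩
    rcases hB with h|h|h|h|h|h|h <;> subst h <;>
      simp only [i1,i2,i3,i4,i5,i6,i7] at hne ⊢ <;> tauto
  · rintro (h|h|h|h|h) <;> subst h <;> refine ⟨⟨?_, ?_, ?_⟩, by simp⟩
    exacts [{q}, by tauto, i2, {r}, by tauto, i3, {s}, by tauto, i4,
      {p,q,r}, by tauto, i6, {p,q,r,s}, by tauto, i7]

/-- Restriction of `(((qr)p)s)` to `{p,r,s}` is `((pr)s)`. -/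
private lemma restr_b_prs (p q r s : ℕ) (hpq : p ≠ q) (hpr : p ≠ r) (hps : p ≠ s)
    (hqr : q ≠ r) (hqs : q ≠ s) (hrs : r ≠ s) :
    restrictT ({{p}, {q}, {r}, {s}, {q, r}, {p, q, r}, {p, q, r, s}} : PTree) {p, r, s}
      = ({{p}, {r}, {s}, {p, r}, {p, r, s}} : PTree) := by
  have i1 : ({p} : Finset ℕ) ∩ {p,r,s} = {p} := by ext x; simp; try omega
  have i2 : ({q} : Finset ℕ) ∩ {p,r,s} = ∅ := by ext x; simp; try omega
  have i3 : ({r} : Finset ℕ) ∩ {p,r,s} = {r} := by ext x; simp; try omega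
  have i4 : ({s} : Finset ℕ) ∩ {p,r,s} = {s} := by ext x; simp; try omega
  have i5 : ({q,r} : Finset ℕ) ∩ {p,r,s} = {r} := by ext x; simp; try omega
  have i6 : ({p,q,r} : Finset ℕ) ∩ {p,r,s} = {p,r} := by ext x; simp; try omega
  have i7 : ({p,q,r,s} : Finset ℕ) ∩ {p,r,s} = {p,r,s} := by ext x; simp; try omega
  ext C
  simp only [restrictT, Finset.mem_filter, Finset.mem_image, Finset.mem_insert,
    Finset.mem_singleton]
  constructor
  · rintro ⟨⟨B, hB, rfl⟩, hne⟩
    rcases hB with h|h|h|h|h|h|h <;> subst h <;>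
      simp only [i1,i2,i3,i4,i5,i6,i7] at hne ⊢ <;> tauto
  · rintro (h|h|h|h|h) <;> subst h <;> refine ⟨⟨?_, ?_, ?_⟩, by simp⟩
    exacts [{p}, by tauto, i1, {r}, by tauto, i3, {s}, by tauto, i4,
      {p,q,r}, by tauto, i6, {p,q,r,s}, by tauto, i7]

/-- Restriction of `(((qr)p)s)` to `{q,r,s}` is `((qr)s)`. -/
private lemma restr_b_qrs (p q r s : ℕ) (hpq : p ≠ q) (hpr : p ≠ r) (hps : p ≠ s)
    (hqr : q ≠ r) (hqs : q ≠ s) (hrs : r ≠ s) :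
    restrictT ({{p}, {q}, {r}, {s}, {q, r}, {p, q, r}, {p, q, r, s}} : PTree) {q, r, s}
      = ({{q}, {r}, {s}, {q, r}, {q, r, s}} : PTree) := by
  have i1 : ({p} : Finset ℕ) ∩ {q,r,s} = ∅ := by ext x; simp; try omega
  have i2 : ({q} : Finset ℕ) ∩ {q,r,s} = {q} := by ext x; simp; try omega
  have i3 : ({r} : Finset ℕ) ∩ {q,r,s} = {r} := by ext x; simp; try omega
  have i4 : ({s} : Finset ℕ) ∩ {q,r,s} = {s} := by ext x; simp; try omega
  have i5 : ({q,r} : Finset ℕ) ∩ {q,r,s} = {q,r} := by ext x; simp; try omega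
  have i6 : ({p,q,r} : Finset ℕ) ∩ {q,r,s} = {q,r} := by ext x; simp; try omega
  have i7 : ({p,q,r,s} : Finset ℕ) ∩ {q,r,s} = {q,r,s} := by ext x; simp; try omega
  ext C
  simp only [restrictT, Finset.mem_filter, Finset.mem_image, Finset.mem_insert,
    Finset.mem_singleton]
  constructor
  · rintro ⟨⟨B, hB, rfl⟩, hne⟩
    rcases hB with h|h|h|h|h|h|h <;> subst h <;>
      simp only [i1,i2,i3,i4,i5,i6,i7] at hne ⊢ <;> tauto
  · rintro (h|h|h|h|h) <;> subst h <;> refine ⟨⟨?_, ?_, ?_⟩, by simp⟩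
    exacts [{q}, by tauto, i2, {r}, by tauto, i3, {s}, by tauto, i4,
      {q,r}, by tauto, i5, {p,q,r,s}, by tauto, i7]

end AuxForClusterAbc

set_option maxHeartbeats 1600000

/-- For a regular extension-stable consensus method, applied to the profile
`(((ab)c)d, ((bc)a)d)`, the set `{a,b,c}` is a cluster of the consensus tree. -/
theorem cluster_abc_of_regular_extension_stable (φ : ConsensusMethod)
    (hH : ProducesHierarchy φ) (hU : Unanimity φ) (hA : Anonymity φ)
    (hN : Neutrality φ) (hE : ExtensionStable φ)
    (a b c d : ℕ) (hab : a ≠ b) (hac : a ≠ c) (had : a ≠ d)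
    (hbc : b ≠ c) (hbd : b ≠ d) (hcd : c ≠ d) :
    ({a, b, c} : Finset ℕ) ∈
      φ {a, b, c, d}
        [({{a}, {b}, {c}, {d}, {a, b}, {a, b, c}, {a, b, c, d}} : PTree),
         ({{a}, {b}, {c}, {d}, {b, c}, {a, b, c}, {a, b, c, d}} : PTree)] := by
  set X : Finset ℕ := {a, b, c, d} with hXdef
  set T1 : PTree := {{a}, {b}, {c}, {d}, {a, b}, {a, b, c}, {a, b, c, d}} with hT1def
  set T2 : PTree := {{a}, {b}, {c}, {d}, {b, c}, {a, b, c}, {a, b, c, d}} with hT2def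
  set P : List PTree := [T1, T2] with hPdef
  have hT1 : IsHierarchy X T1 := hier4a a b c d hab hac had hbc hbd hcd
  have hT2 : IsHierarchy X T2 := hier4b a b c d hab hac had hbc hbd hcd
  have hP : ∀ T ∈ P, IsHierarchy X T := by
    intro T hT
    simp only [hPdef, List.mem_cons, List.mem_singleton, List.not_mem_nil, or_false] at hT
    rcases hT with h | h <;> subst h
    · exact hT1
    · exact hT2
  have hPne : P ≠ [] := by simp [hPdef]
  have hφ : IsHierarchy X (φ X P) := hH X P hPne hP
  -- Restriction to Y1 = {a, c, d}
  have hsub1 : ({a, c, d} : Finset ℕ) ⊆ X := by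
    intro x hx
    simp only [hXdef, Finset.mem_insert, Finset.mem_singleton] at hx ⊢
    omega
  have hmap1 : P.map (fun T => restrictT T ({a, c, d} : Finset ℕ))
      = List.replicate 2 ({{a}, {c}, {d}, {a, c}, {a, c, d}} : PTree) := by
    simp only [hPdef, List.map_cons, List.map_nil, hT1def, hT2def]
    rw [restr_a_prs a b c d hab hac had hbc hbd hcd,
      restr_b_prs a b c d hab hac had hbc hbd hcd]
    rfl
  have hu1 : φ ({a, c, d} : Finset ℕ)
      (List.replicate 2 ({{a}, {c}, {d}, {a, c}, {a, c, d}} : PTree))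
      = ({{a}, {c}, {d}, {a, c}, {a, c, d}} : PTree) :=
    hU _ _ 2 (by norm_num) (hier3 a c d hac had hcd)
  have key1 : ({a, c} : Finset ℕ) ∈ restrictT (φ X P) ({a, c, d} : Finset ℕ) := by
    have h := hE X P ({a, c, d} : Finset ℕ) hP hsub1 ⟨a, by simp⟩
    rw [hmap1, hu1] at h
    exact h (by simp)
  obtain ⟨C, hCmem, hCint⟩ : ∃ B ∈ φ X P, B ∩ ({a, c, d} : Finset ℕ) = {a, c} := by
    have h := key1
    simp only [restrictT, Finset.mem_filter, Finset.mem_image] at h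
    obtain ⟨⟨B, hB, hBe⟩, -⟩ := h
    exact ⟨B, hB, hBe⟩
  have haC : a ∈ C := by
    have : a ∈ C ∩ ({a, c, d} : Finset ℕ) := by rw [hCint]; simp
    exact (Finset.mem_inter.mp this).1
  have hcC : c ∈ C := by
    have : c ∈ C ∩ ({a, c, d} : Finset ℕ) := by rw [hCint]; simp
    exact (Finset.mem_inter.mp this).1
  have hdC : d ∉ C := by
    intro h
    have : d ∈ C ∩ ({a, c, d} : Finset ℕ) := Finset.mem_inter.mpr ⟨h, by simp⟩
    rw [hCint] at this
    simp only [Finset.mem_insert, Finset.mem_singleton] at this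
    omega
  -- Restriction to Y2 = {b, c, d}
  have hsub2 : ({b, c, d} : Finset ℕ) ⊆ X := by
    intro x hx
    simp only [hXdef, Finset.mem_insert, Finset.mem_singleton] at hx ⊢
    omega
  have hmap2 : P.map (fun T => restrictT T ({b, c, d} : Finset ℕ))
      = List.replicate 2 ({{b}, {c}, {d}, {b, c}, {b, c, d}} : PTree) := by
    simp only [hPdef, List.map_cons, List.map_nil, hT1def, hT2def]
    rw [restr_a_qrs a b c d hab hac had hbc hbd hcd,
      restr_b_qrs a b c d hab hac had hbc hbd hcd]
    rfl
  have hu2 : φ ({b, c, d} : Finset ℕ)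
      (List.replicate 2 ({{b}, {c}, {d}, {b, c}, {b, c, d}} : PTree))
      = ({{b}, {c}, {d}, {b, c}, {b, c, d}} : PTree) :=
    hU _ _ 2 (by norm_num) (hier3 b c d hbc hbd hcd)
  have key2 : ({b, c} : Finset ℕ) ∈ restrictT (φ X P) ({b, c, d} : Finset ℕ) := by
    have h := hE X P ({b, c, d} : Finset ℕ) hP hsub2 ⟨b, by simp⟩
    rw [hmap2, hu2] at h
    exact h (by simp)
  obtain ⟨D, hDmem, hDint⟩ : ∃ B ∈ φ X P, B ∩ ({b, c, d} : Finset ℕ) = {b, c} := by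
    have h := key2
    simp only [restrictT, Finset.mem_filter, Finset.mem_image] at h
    obtain ⟨⟨B, hB, hBe⟩, -⟩ := h
    exact ⟨B, hB, hBe⟩
  have hbD : b ∈ D := by
    have : b ∈ D ∩ ({b, c, d} : Finset ℕ) := by rw [hDint]; simp
    exact (Finset.mem_inter.mp this).1
  have hcD : c ∈ D := by
    have : c ∈ D ∩ ({b, c, d} : Finset ℕ) := by rw [hDint]; simp
    exact (Finset.mem_inter.mp this).1
  have hdD : d ∉ D := by
    intro h
    have : d ∈ D ∩ ({b, c, d} : Finset ℕ) := Finset.mem_inter.mpr ⟨h, by simp⟩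
    rw [hDint] at this
    simp only [Finset.mem_insert, Finset.mem_singleton] at this
    omega
  -- Combine using laminarity
  rcases hφ.laminar C hCmem D hDmem with hcd0 | hCD | hDC
  · exfalso
    have : c ∈ C ∩ D := Finset.mem_inter.mpr ⟨hcC, hcD⟩
    rw [hcd0] at this
    exact absurd this (Finset.notMem_empty c)
  · have hEq : D = ({a, b, c} : Finset ℕ) := by
      ext x
      simp only [Finset.mem_insert, Finset.mem_singleton]
      constructor
      · intro hx
        have hxX := hφ.subset_top D hDmem hx
        simp only [hXdef, Finset.mem_insert, Finset.mem_singleton] at hxX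
        have hxd : x ≠ d := fun hh => hdD (hh ▸ hx)
        omega
      · rintro (h | h | h) <;> subst h
        · exact hCD haC
        · exact hbD
        · exact hcD
    exact hEq ▸ hDmem
  · have hEq : C = ({a, b, c} : Finset ℕ) := by
      ext x
      simp only [Finset.mem_insert, Finset.mem_singleton]
      constructor
      · intro hx
        have hxX := hφ.subset_top C hCmem hx
        simp only [hXdef, Finset.mem_insert, Finset.mem_singleton] at hxX
        have hxd : x ≠ d := fun hh => hdC (hh ▸ hx)
        omega
      · rintro (h | h | h) <;> subst h
        · exact haC
        · exact hDC hbD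
        · exact hcC
    exact hEq ▸ hCmem
end

section
/- Majority rule consensus satisfies the invariance property φ(P · φ(P)) = φ(P): for any profile P of rooted phylogenetic trees on X, appending the majority rule consensus tree to P does not change the majority rule consensus. -/
/-- Majority rule consensus on leaf set `X`: the clusters are the subsets of `X`
appearing as clusters in strictly more than half of the trees of the profile. -/
def majC (X : Finset ℕ) (P : List PTree) : PTree :=
  X.powerset.filter (fun A => P.length < 2 * P.countP (fun T => decide (A ∈ T)))

/-- Invariance of majority rule: appending the majority rule consensus tree to
the profile does not change the majority rule consensus. -/
theorem majority_invariance (X : Finset ℕ) (P : List PTree)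
    (hP : P ≠ []) (hh : ∀ T ∈ P, IsHierarchy X T) :
    majC X (P ++ [majC X P]) = majC X P := by
  ext A
  simp only [majC, Finset.mem_filter, Finset.mem_powerset, List.countP_append,
    List.length_append, List.length_singleton, List.countP_cons, List.countP_nil]
  simp only [decide_eq_true_eq]
  by_cases hm : A ⊆ X ∧ P.length < 2 * P.countP (fun T => decide (A ∈ T))
  · rw [if_pos hm]
    obtain ⟨h1, h2⟩ := hm
    constructor
    · rintro ⟨_, _⟩; exact ⟨h1, h2⟩
    · rintro _; exact ⟨h1, by omega⟩
  · rw [if_neg hm]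
    constructor
    · rintro ⟨h1, h2⟩
      exact absurd ⟨h1, by omega⟩ hm
    · rintro h; exact absurd h hm
end

section
/- If φ is a consensus method satisfying unanimity, anonymity, and associative stability, then φ(P) depends only on the set of distinct trees appearing in the profile P, not on their multiplicities or order. Equivalently, if profiles P and P' (of possibly different lengths) contain exactly the same set of distinct trees, then φ(P) = φ(P'). -/
/-- A unanimous, anonymous, associatively stable consensus method (on a fixed
leaf set `X`) depends only on the set of distinct trees in the profile. -/
theorem assoc_stable_ignores_multiplicities (X : Finset ℕ)
    (φ : List PTree → PTree)
    (hcl : ∀ P, P ≠ [] → (∀ T ∈ P, IsHierarchy X T) → IsHierarchy X (φ P))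
    (hU : ∀ (T : PTree) (k : ℕ), k ≠ 0 → IsHierarchy X T →
      φ (List.replicate k T) = T)
    (hA : ∀ P P' : List PTree, (∀ T ∈ P, IsHierarchy X T) → P.Perm P' →
      φ P = φ P')
    (hAS : ∀ (P : List PTree) (T : PTree), P ≠ [] →
      (∀ T' ∈ P, IsHierarchy X T') → IsHierarchy X T →
      φ (P ++ [T]) = φ [φ P, T])
    (P P' : List PTree) (hP : P ≠ []) (hP' : P' ≠ [])
    (h1 : ∀ T ∈ P, IsHierarchy X T) (h2 : ∀ T ∈ P', IsHierarchy X T)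
    (hsame : ∀ T : PTree, T ∈ P ↔ T ∈ P') :
    φ P = φ P' := by
  -- φ of a singleton
  have hone : ∀ T : PTree, IsHierarchy X T → φ [T] = T := by
    intro T hT
    simpa using hU T 1 one_ne_zero hT
  -- congruence: replacing a prefix by one with the same consensus
  have hcongr : ∀ (R : List PTree), (∀ T ∈ R, IsHierarchy X T) →
      ∀ Q Q' : List PTree, Q ≠ [] → Q' ≠ [] →
      (∀ T ∈ Q, IsHierarchy X T) → (∀ T ∈ Q', IsHierarchy X T) →
      φ Q = φ Q' → φ (Q ++ R) = φ (Q' ++ R) := by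
    intro R
    induction R using List.reverseRecOn with
    | nil => intro _ Q Q' _ _ _ _ h; simpa using h
    | append_singleton R0 a ih =>
      intro hR Q Q' hQ hQ' hQh hQ'h h
      have hR0 : ∀ T ∈ R0, IsHierarchy X T := fun T hT => hR T (by simp [hT])
      have ha : IsHierarchy X a := hR a (by simp)
      have hQR0 : ∀ T ∈ Q ++ R0, IsHierarchy X T := by
        intro T hT
        rcases List.mem_append.mp hT with h' | h'
        · exact hQh T h'
        · exact hR0 T h'
      have hQ'R0 : ∀ T ∈ Q' ++ R0, IsHierarchy X T := by
        intro T hT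
        rcases List.mem_append.mp hT with h' | h'
        · exact hQ'h T h'
        · exact hR0 T h'
      have ne1 : Q ++ R0 ≠ [] := by simp [hQ]
      have ne2 : Q' ++ R0 ≠ [] := by simp [hQ']
      have key : φ (Q ++ R0) = φ (Q' ++ R0) := ih hR0 Q Q' hQ hQ' hQh hQ'h h
      calc φ (Q ++ (R0 ++ [a])) = φ ((Q ++ R0) ++ [a]) := by rw [List.append_assoc]
        _ = φ [φ (Q ++ R0), a] := hAS (Q ++ R0) a ne1 hQR0 ha
        _ = φ [φ (Q' ++ R0), a] := by rw [key]
        _ = φ ((Q' ++ R0) ++ [a]) := (hAS (Q' ++ R0) a ne2 hQ'R0 ha).symm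
        _ = φ (Q' ++ (R0 ++ [a])) := by rw [List.append_assoc]
  -- duplicate absorption
  have hdup : ∀ (Q : List PTree) (T : PTree), Q ≠ [] →
      (∀ S ∈ Q, IsHierarchy X S) → T ∈ Q → φ (Q ++ [T]) = φ Q := by
    intro Q T hQ hQh hTQ
    have hT : IsHierarchy X T := hQh T hTQ
    set Q0 := Q.erase T with hQ0
    have perm1 : Q.Perm (T :: Q0) := List.perm_cons_erase hTQ
    have hQ0h : ∀ S ∈ Q0, IsHierarchy X S := fun S hS =>
      hQh S (List.mem_of_mem_erase hS)
    have hQapph : ∀ S ∈ Q ++ [T], IsHierarchy X S := by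
      intro S hS
      rcases List.mem_append.mp hS with h' | h'
      · exact hQh S h'
      · simp at h'; subst h'; exact hT
    have perm2 : (Q ++ [T]).Perm ([T, T] ++ Q0) := by
      refine (perm1.append_right [T]).trans ?_
      show (T :: (Q0 ++ [T])).Perm (T :: T :: Q0)
      exact List.Perm.cons T (List.perm_append_singleton T Q0)
    have e1 : φ (Q ++ [T]) = φ ([T, T] ++ Q0) := hA _ _ hQapph perm2
    have eTT : φ [T, T] = φ [T] := by
      have h2 : φ [T, T] = T := by simpa using hU T 2 two_ne_zero hT
      rw [h2, hone T hT]
    have hTTh : ∀ S ∈ ([T, T] : List PTree), IsHierarchy X S := by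
      intro S hS; simp at hS; subst hS; exact hT
    have hTh : ∀ S ∈ ([T] : List PTree), IsHierarchy X S := by
      intro S hS; simp at hS; subst hS; exact hT
    have e2 : φ ([T, T] ++ Q0) = φ ([T] ++ Q0) :=
      hcongr Q0 hQ0h [T, T] [T] (by simp) (by simp) hTTh hTh eTT
    have hTQ0h : ∀ S ∈ (T :: Q0), IsHierarchy X S := by
      intro S hS
      rcases List.mem_cons.mp hS with h' | h'
      · subst h'; exact hT
      · exact hQ0h S h'
    have e3 : φ ([T] ++ Q0) = φ Q := hA _ _ hTQ0h perm1.symm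
    rw [e1, e2, e3]
  -- absorption of a redundant suffix
  have habs : ∀ (R : List PTree), (∀ T ∈ R, T ∈ P) →
      φ (P ++ R) = φ P := by
    intro R
    induction R using List.reverseRecOn with
    | nil => simp
    | append_singleton R0 a ih =>
      intro hR
      have hR0 : ∀ T ∈ R0, T ∈ P := fun T hT => hR T (by simp [hT])
      have ha : a ∈ P := hR a (by simp)
      have hPR0h : ∀ T ∈ P ++ R0, IsHierarchy X T := by
        intro T hT
        rcases List.mem_append.mp hT with h' | h'
        · exact h1 T h'
        · exact h1 T (hR0 T h')
      have step : φ ((P ++ R0) ++ [a]) = φ (P ++ R0) :=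
        hdup (P ++ R0) a (by simp [hP]) hPR0h (by simp [ha])
      calc φ (P ++ (R0 ++ [a])) = φ ((P ++ R0) ++ [a]) := by rw [List.append_assoc]
        _ = φ (P ++ R0) := step
        _ = φ P := ih hR0
  -- symmetric absorption for P'
  have habs' : ∀ (R : List PTree), (∀ T ∈ R, T ∈ P') →
      φ (P' ++ R) = φ P' := by
    intro R
    induction R using List.reverseRecOn with
    | nil => simp
    | append_singleton R0 a ih =>
      intro hR
      have hR0 : ∀ T ∈ R0, T ∈ P' := fun T hT => hR T (by simp [hT])
      have ha : a ∈ P' := hR a (by simp)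
      have hPR0h : ∀ T ∈ P' ++ R0, IsHierarchy X T := by
        intro T hT
        rcases List.mem_append.mp hT with h' | h'
        · exact h2 T h'
        · exact h2 T (hR0 T h')
      have step : φ ((P' ++ R0) ++ [a]) = φ (P' ++ R0) :=
        hdup (P' ++ R0) a (by simp [hP']) hPR0h (by simp [ha])
      calc φ (P' ++ (R0 ++ [a])) = φ ((P' ++ R0) ++ [a]) := by rw [List.append_assoc]
        _ = φ (P' ++ R0) := step
        _ = φ P' := ih hR0
  have eA : φ (P ++ P') = φ P := habs P' (fun T hT => (hsame T).mpr hT)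
  have eB : φ (P' ++ P) = φ P' := habs' P (fun T hT => (hsame T).mp hT)
  have hPPh : ∀ T ∈ P ++ P', IsHierarchy X T := by
    intro T hT
    rcases List.mem_append.mp hT with h' | h'
    · exact h1 T h'
    · exact h2 T h'
  have perm : (P ++ P').Perm (P' ++ P) := List.perm_append_comm
  have := hA (P ++ P') (P' ++ P) hPPh perm
  rw [eA, eB] at this
  exact this
end

section
/- Loose consensus is not associatively stable: for the profile P = (ab|c, ac|b, bc|a) of three rooted triples on leaf set {a,b,c}, the set {b,c} is a cluster of φ_loose(φ_loose(ab|c, ac|b), bc|a) but not a cluster of φ_loose(P). -/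
/-- The rooted triple tree `xy|z`: nontrivial cluster `{x,y}` on leaf set `{x,y,z}`. -/
def tripleTree (x y z : ℕ) : PTree := {{x}, {y}, {z}, {x, y}, {x, y, z}}

/-- `A` is compatible with tree `T` if it is nested with every cluster of `T`. -/
abbrev Compat (A : Finset ℕ) (T : PTree) : Prop := ∀ C ∈ T, Nested A C

/-- All clusters occurring in some tree of the profile. -/
def allClusters (P : List PTree) : PTree := P.foldr (· ∪ ·) ∅

/-- Loose consensus: the clusters occurring in at least one input tree that are
compatible with every input tree. -/
def looseC (P : List PTree) : PTree :=
  (allClusters P).filter (fun A => ∀ T ∈ P, Compat A T)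

lemma not_nested (x y z : ℕ) (hxy : x ≠ y) (hxz : x ≠ z) (hyz : y ≠ z) :
    ¬ Nested ({x, y} : Finset ℕ) ({x, z} : Finset ℕ) := by
  rintro (h | h | h)
  · have hx : x ∈ ({x, y} : Finset ℕ) ∩ {x, z} := by simp
    rw [h] at hx; simp at hx
  · have := h (show y ∈ ({x, y} : Finset ℕ) by simp)
    simp at this; tauto
  · have := h (show z ∈ ({x, z} : Finset ℕ) by simp)
    simp at this; tauto


/-- Loose consensus is not associatively stable: on the profile
`(ab|c, ac|b, bc|a)`, the set `{b,c}` is a cluster of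
`φ_loose(φ_loose(ab|c, ac|b), bc|a)` but not of `φ_loose` of the whole profile. -/
theorem loose_not_assoc_stable (a b c : ℕ) (hab : a ≠ b) (hac : a ≠ c) (hbc : b ≠ c) :
    ({b, c} : Finset ℕ) ∈
        looseC [looseC [tripleTree a b c, tripleTree a c b], tripleTree b c a] ∧
      ({b, c} : Finset ℕ) ∉ looseC [tripleTree a b c, tripleTree a c b, tripleTree b c a] := by
  constructor
  · rw [looseC, Finset.mem_filter]
    constructor
    · simp [allClusters, tripleTree]
    · intro T hT
      simp only [List.mem_cons, List.not_mem_nil, or_false, List.mem_singleton] at hT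
      rcases hT with rfl | rfl
      · -- Compat with the inner loose consensus
        intro C hC
        rw [looseC, Finset.mem_filter] at hC
        obtain ⟨hC1, hC2⟩ := hC
        simp only [allClusters, List.foldr, Finset.union_empty, Finset.mem_union,
          tripleTree, Finset.mem_insert, Finset.mem_singleton] at hC1
        rcases hC1 with ((rfl|rfl|rfl|rfl|rfl)|(rfl|rfl|rfl|rfl|rfl))
        · left; rw [Finset.inter_comm]
          exact Finset.singleton_inter_of_notMem (by simp [hab, hac])
        · right; right; simp
        · right; right; simp
        · exfalso
          exact not_nested a b c hab hac hbc
            (hC2 (tripleTree a c b) (by simp) {a, c} (by simp [tripleTree]))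
        · right; left; intro x hx; simp at hx ⊢; tauto
        · left; rw [Finset.inter_comm]
          exact Finset.singleton_inter_of_notMem (by simp [hab, hac])
        · right; right; simp
        · right; right; simp
        · exfalso
          exact not_nested a c b hac hab (Ne.symm hbc)
            (hC2 (tripleTree a b c) (by simp) {a, b} (by simp [tripleTree]))
        · right; left; intro x hx; simp at hx ⊢; tauto
      · -- Compat with tripleTree b c a
        intro C hC
        simp only [tripleTree, Finset.mem_insert, Finset.mem_singleton] at hC
        rcases hC with rfl|rfl|rfl|rfl|rfl
        · right; right; simp
        · right; right; simp
        · left; exact Finset.inter_singleton_of_notMem (by simp [hab, hac])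
        · right; left; exact subset_rfl
        · right; left; intro x hx; simp at hx ⊢; tauto
  · intro h
    rw [looseC, Finset.mem_filter] at h
    have := h.2 (tripleTree a b c) (by simp) {a, b} (by simp [tripleTree])
    rw [show ({a, b} : Finset ℕ) = {b, a} from Finset.pair_comm a b] at this
    exact not_nested b c a hbc (Ne.symm hab) (Ne.symm hac) this
end
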